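/- (Itô isometry for Liouville fBm, case 0 < β < 1/2.) Let T > 0, let 0 < β < 1/2, and let (Ω, F, P) be a probability space carrying random variables W(t) ∈ L²(Ω), t ∈ [0,T], with E[W(t)] = 0 and E[W(s)W(t)] = Γ^β_{s,t} for all s,t ∈ [0,T]. Let N ∈ ℕ, let (a_j, b_j], j = 1,…,N, be pairwise disjoint subintervals of (0,T], let c_1,…,c_N ∈ ℝ, and set f := Σ_{j=1}^N c_j 1_{(a_j,b_j]}. Define g(s) := Γ(β+1/2)^{-1} Σ_{j=1}^N c_j [ (b_j - s)^{β-1/2} 1_{(0,b_j)}(s) − (a_j - s)^{β-1/2} 1_{(0,a_j)}(s) ] for s ∈ (0,T). Then g ∈ L²(0,T), the right Liouville fractional integral satisfies I_{T-}^{1/2-β} g = f almost everywhere on (0,T), and E| Σ_{j=1}^N c_j ( W(b_j) − W(a_j) ) |² = ‖g‖²_{L²(0,T)}. -/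

import Mathlib

open MeasureTheory Set
open scoped NNReal ENNReal

/-- The left Liouville fractional integral of order `α` on `(a,·)`:
`(I_{a+}^α f)(t) = Γ(α)⁻¹ ∫_a^t (t-s)^(α-1) f(s) ds`. -/
noncomputable def leftFrac (a α : ℝ) (f : ℝ → ℝ) : ℝ → ℝ :=
  fun t => (Real.Gamma α)⁻¹ * ∫ s in Ioo a t, (t - s) ^ (α - 1) * f s

/-- The right Liouville fractional integral of order `α` on `(·,b)`:
`(I_{b-}^α f)(t) = Γ(α)⁻¹ ∫_t^b (s-t)^(α-1) f(s) ds`. -/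
noncomputable def rightFrac (b α : ℝ) (f : ℝ → ℝ) : ℝ → ℝ :=
  fun t => (Real.Gamma α)⁻¹ * ∫ s in Ioo t b, (s - t) ^ (α - 1) * f s

/-- Lebesgue measure restricted to the interval `(a,b)`, modelling `L²(a,b)`. -/
noncomputable def msr (a b : ℝ) : Measure ℝ := volume.restrict (Ioo a b)

/-- The Liouville fBm covariance
`Γ^β_{s,t} = Γ(β+1/2)⁻² ∫_0^{s∧t} (s-u)^(β-1/2) (t-u)^(β-1/2) du`. -/
noncomputable def fbmCov (β s t : ℝ) : ℝ :=
  ((Real.Gamma (β + 1/2)) ^ 2)⁻¹ *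
    ∫ u in Ioo 0 (min s t), (s - u) ^ (β - 1/2) * (t - u) ^ (β - 1/2)

/-- The kernel `u ↦ (b-u)^α 1_{(0,b)}(u)`. -/
noncomputable def liouvKer (α b : ℝ) : ℝ → ℝ :=
  fun u => (Ioo 0 b).indicator (fun u => (b - u) ^ α) u

section helpers

lemma myint_mul {α : Type*} [MeasurableSpace α] {μ : Measure α} {f g : α → ℝ}
    (hf : MemLp f 2 μ) (hg : MemLp g 2 μ) : Integrable (fun x => f x * g x) μ := by
  have h := hg.smul (φ := f) hf (r := 1)
  rw [memLp_one_iff_integrable] at h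
  exact h

lemma liouvKer_measurable (α b : ℝ) : Measurable (liouvKer α b) := by
  unfold liouvKer
  apply Measurable.indicator _ measurableSet_Ioo
  fun_prop

lemma int_rpow_sub {b r : ℝ} (hr : -1 < r) :
    IntegrableOn (fun u => (b - u) ^ r) (Ioo 0 b) := by
  rcases le_or_gt b 0 with hb | hb
  · rw [Ioo_eq_empty (not_lt.2 hb)]
    simp
  · have h := intervalIntegral.intervalIntegrable_rpow' (a := (0:ℝ)) (b := b) (r := r) hr
    have h2 := h.comp_sub_left b
    rw [sub_zero, sub_self] at h2
    have h3 := h2.symm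
    rw [intervalIntegrable_iff_integrableOn_Ioo_of_le hb.le] at h3
    exact h3

lemma ker_memL2 {T b β : ℝ} (hβ : 0 < β) (hbT : b ≤ T) :
    MemLp (liouvKer (β - 1/2) b) 2 (msr 0 T) := by
  rw [memLp_two_iff_integrable_sq (liouvKer_measurable _ _).aestronglyMeasurable]
  have hpt : (fun u => liouvKer (β - 1/2) b u ^ 2)
      = (Ioo 0 b).indicator (fun u => (b - u) ^ (2 * (β - 1/2))) := by
    funext u
    unfold liouvKer
    by_cases hu : u ∈ Ioo 0 b
    · rw [indicator_of_mem hu, indicator_of_mem hu]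
      have hbu : 0 < b - u := by simp only [mem_Ioo] at hu; linarith [hu.2]
      rw [sq, ← Real.rpow_add hbu]
      ring_nf
    · rw [indicator_of_notMem hu, indicator_of_notMem hu]
      simp
  rw [hpt]
  unfold msr
  rw [integrable_indicator_iff measurableSet_Ioo, IntegrableOn,
    Measure.restrict_restrict measurableSet_Ioo,
    inter_eq_self_of_subset_left (Ioo_subset_Ioo_right hbT)]
  exact int_rpow_sub (by linarith)

lemma ker_cov {β T : ℝ} {s t : ℝ} (hs : s ≤ T) (ht : t ≤ T) :
    ∫ u in Ioo 0 T, liouvKer (β - 1/2) s u * liouvKer (β - 1/2) t u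
      = ∫ u in Ioo 0 (min s t), (s - u) ^ (β - 1/2) * (t - u) ^ (β - 1/2) := by
  have hpt : (fun u => liouvKer (β - 1/2) s u * liouvKer (β - 1/2) t u)
      = (Ioo 0 (min s t)).indicator
          (fun u => (s - u) ^ (β - 1/2) * (t - u) ^ (β - 1/2)) := by
    funext u
    unfold liouvKer
    rw [← Set.inter_indicator_mul, Ioo_inter_Ioo, max_self]
  rw [hpt, integral_indicator measurableSet_Ioo,
    Measure.restrict_restrict measurableSet_Ioo,
    inter_eq_self_of_subset_left
      (Ioo_subset_Ioo_right (le_trans (min_le_left s t) hs))]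

end helpers

section beta

lemma beta_cx_eq {p q : ℝ} (x : ℝ) (hx : x ∈ uIcc (0:ℝ) 1) :
    (x:ℂ) ^ ((p:ℂ) - 1) * (1 - (x:ℂ)) ^ ((q:ℂ) - 1)
      = ((x ^ (p-1) * (1-x) ^ (q-1) : ℝ) : ℂ) := by
  rw [uIcc_of_le zero_le_one, mem_Icc] at hx
  have h1 : ((x:ℝ) : ℂ) ^ ((p:ℂ) - 1) = ((x ^ (p-1) : ℝ) : ℂ) := by
    rw [Complex.ofReal_cpow hx.1]; norm_cast
  have h2 : ((1 - x : ℝ) : ℂ) ^ ((q:ℂ) - 1) = (((1-x) ^ (q-1) : ℝ) : ℂ) := by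
    rw [Complex.ofReal_cpow (by linarith [hx.2])]; norm_cast
  rw [Complex.ofReal_mul, ← h1, ← h2]
  push_cast
  ring

lemma real_beta_integrable {p q : ℝ} (hp : 0 < p) (hq : 0 < q) :
    IntervalIntegrable (fun x : ℝ => x ^ (p-1) * (1-x) ^ (q-1)) volume 0 1 := by
  have h := Complex.betaIntegral_convergent (u := (p:ℂ)) (v := (q:ℂ)) (by simpa) (by simpa)
  have h2 : IntervalIntegrable
      (fun x : ℝ => Complex.re ((x:ℂ) ^ ((p:ℂ) - 1) * (1 - (x:ℂ)) ^ ((q:ℂ) - 1))) volume 0 1 :=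
    ⟨h.1.re, h.2.re⟩
  rw [intervalIntegrable_iff_integrableOn_Ioo_of_le zero_le_one] at h2 ⊢
  apply h2.congr
  filter_upwards [ae_restrict_mem measurableSet_Ioo] with x hx
  have hx' : x ∈ uIcc (0:ℝ) 1 := by
    rw [uIcc_of_le zero_le_one]; exact Ioo_subset_Icc_self hx
  rw [beta_cx_eq x hx', Complex.ofReal_re]

lemma real_beta_value {p q : ℝ} (hp : 0 < p) (hq : 0 < q) :
    Real.Gamma p * Real.Gamma q
      = Real.Gamma (p+q) * ∫ x in (0:ℝ)..1, x ^ (p-1) * (1-x) ^ (q-1) := by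
  have h := Complex.Gamma_mul_Gamma_eq_betaIntegral (s := (p:ℂ)) (t := (q:ℂ))
    (by simpa) (by simpa)
  have e3 : Complex.betaIntegral (p:ℂ) (q:ℂ)
      = ((∫ x in (0:ℝ)..1, x ^ (p-1) * (1-x) ^ (q-1) : ℝ) : ℂ) := by
    unfold Complex.betaIntegral
    rw [← intervalIntegral.integral_ofReal]
    exact intervalIntegral.integral_congr fun x hx => beta_cx_eq x hx
  rw [← Complex.ofReal_inj, Complex.ofReal_mul, Complex.ofReal_mul,
    ← Complex.Gamma_ofReal, ← Complex.Gamma_ofReal, ← Complex.Gamma_ofReal,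
    Complex.ofReal_add, ← e3]
  exact h

lemma beta_Ioo {p q t b : ℝ} (hp : 0 < p) (hq : 0 < q) (h : t < b) :
    IntegrableOn (fun s => (s - t) ^ (p-1) * (b - s) ^ (q-1)) (Ioo t b) ∧
    ∫ s in Ioo t b, (s - t) ^ (p-1) * (b - s) ^ (q-1)
      = (b - t) ^ (p + q - 1) * ∫ x in (0:ℝ)..1, x ^ (p-1) * (1-x) ^ (q-1) := by
  set c := b - t with hc
  have hc0 : 0 < c := by simp only [hc]; linarith
  set f : ℝ → ℝ := fun x => x ^ (p-1) * (1-x) ^ (q-1) with hf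
  set G' : ℝ → ℝ := fun s => c ^ (p+q-2) * f ((s - t) * c⁻¹) with hG'
  have heq : EqOn (fun s => (s - t) ^ (p-1) * (b - s) ^ (q-1)) G' (Ioo t b) := by
    intro s hs
    have h1 : 0 < s - t := by simp only [mem_Ioo] at hs; linarith [hs.1]
    have h2 : 0 < b - s := by simp only [mem_Ioo] at hs; linarith [hs.2]
    have e1 : 1 - (s - t) * c⁻¹ = (b - s) * c⁻¹ := by
      field_simp
      rw [hc]; ring
    have e2 : c ^ (p+q-2) = c ^ (p-1) * c ^ (q-1) := by
      rw [← Real.rpow_add hc0]; ring_nf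
    simp only [hG', hf, e1]
    rw [Real.mul_rpow h1.le (inv_nonneg.2 hc0.le), Real.mul_rpow h2.le (inv_nonneg.2 hc0.le),
      Real.inv_rpow hc0.le, Real.inv_rpow hc0.le, e2]
    have n1 : c ^ (p-1) ≠ 0 := (Real.rpow_pos_of_pos hc0 _).ne'
    have n2 : c ^ (q-1) ≠ 0 := (Real.rpow_pos_of_pos hc0 _).ne'
    field_simp
  have hfi : IntervalIntegrable f volume 0 1 := real_beta_integrable hp hq
  have h1 := hfi.comp_mul_right (c := c⁻¹)
  rw [zero_div, one_div, inv_inv] at h1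
  have h2 := h1.comp_sub_right t
  rw [zero_add] at h2
  have hct : c + t = b := by rw [hc]; ring
  rw [hct] at h2
  have h3 := h2.const_mul (c ^ (p+q-2))
  rw [intervalIntegrable_iff_integrableOn_Ioo_of_le h.le] at h3
  have hInt : IntegrableOn G' (Ioo t b) := h3
  refine ⟨hInt.congr_fun (fun s hs => (heq hs).symm) measurableSet_Ioo, ?_⟩
  rw [setIntegral_congr_fun measurableSet_Ioo heq, ← integral_Ioc_eq_integral_Ioo,
    ← intervalIntegral.integral_of_le h.le]
  simp only [hG']
  rw [intervalIntegral.integral_const_mul]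
  rw [intervalIntegral.integral_comp_sub_right (fun x => f (x * c⁻¹)) t]
  rw [intervalIntegral.integral_comp_mul_right f (inv_ne_zero hc0.ne')]
  rw [sub_self, zero_mul, ← hc, mul_inv_cancel₀ hc0.ne', inv_inv, smul_eq_mul]
  rw [← mul_assoc, ← Real.rpow_add_one hc0.ne']
  ring_nf

lemma beta_one {β t b : ℝ} (hβ : 0 < β) (hβ' : β < 1/2) (h : t < b) :
    IntegrableOn (fun s => (s - t) ^ (1/2 - β - 1) * (b - s) ^ (β - 1/2)) (Ioo t b) ∧
    ∫ s in Ioo t b, (s - t) ^ (1/2 - β - 1) * (b - s) ^ (β - 1/2)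
      = Real.Gamma (1/2 - β) * Real.Gamma (β + 1/2) := by
  have h1 := beta_Ioo (p := 1/2 - β) (q := β + 1/2) (by linarith) (by linarith) h
  rw [show β + 1/2 - 1 = β - 1/2 by ring] at h1
  rw [show (1/2 - β) + (β + 1/2) - 1 = 0 by ring, Real.rpow_zero, one_mul] at h1
  refine ⟨h1.1, ?_⟩
  have hv := real_beta_value (p := 1/2 - β) (q := β + 1/2)
    (by linarith) (by linarith)
  rw [show (1/2 - β) + (β + 1/2) = 1 by ring, Real.Gamma_one, one_mul] at hv
  rw [show β + 1/2 - 1 = β - 1/2 by ring] at hv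
  rw [h1.2, ← hv]

/-- Integrability and value of
`∫_{(t,T)} (s-t)^{-β-1/2} liouvKer (β-1/2) b s ds`. -/
lemma Jlemma {β T t b : ℝ} (hβ : 0 < β) (hβ' : β < 1/2) (ht : 0 < t) (hbT : b ≤ T)
    (hne : t ≠ b) :
    IntegrableOn (fun s => (s - t) ^ (1/2 - β - 1) * liouvKer (β - 1/2) b s) (Ioo t T) ∧
    ∫ s in Ioo t T, (s - t) ^ (1/2 - β - 1) * liouvKer (β - 1/2) b s
      = (if t < b then Real.Gamma (1/2 - β) * Real.Gamma (β + 1/2) else 0) := by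
  rcases lt_or_gt_of_ne hne with hlt | hgt
  · have hbeta := beta_one hβ hβ' hlt
    have hpt : EqOn (fun s => (s - t) ^ (1/2 - β - 1) * liouvKer (β - 1/2) b s)
        ((Ioo t b).indicator (fun s => (s - t) ^ (1/2 - β - 1) * (b - s) ^ (β - 1/2)))
        (Ioo t T) := by
      intro s hs
      simp only [mem_Ioo] at hs
      unfold liouvKer
      by_cases hsb : s < b <;>
        simp [indicator_apply, mem_Ioo, hsb, hs.1, show (0:ℝ) < s from lt_trans ht hs.1]
    have hsub : Ioo t b ⊆ Ioo t T := Ioo_subset_Ioo_right hbT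
    have hIi : IntegrableOn
        ((Ioo t b).indicator fun s => (s - t) ^ (1/2 - β - 1) * (b - s) ^ (β - 1/2))
        (Ioo t T) := by
      rw [IntegrableOn, integrable_indicator_iff measurableSet_Ioo, IntegrableOn,
        Measure.restrict_restrict measurableSet_Ioo, inter_eq_self_of_subset_left hsub]
      exact hbeta.1
    refine ⟨hIi.congr_fun (fun s hs => (hpt hs).symm) measurableSet_Ioo, ?_⟩
    rw [setIntegral_congr_fun measurableSet_Ioo hpt, integral_indicator measurableSet_Ioo,
      Measure.restrict_restrict measurableSet_Ioo, inter_eq_self_of_subset_left hsub,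
      hbeta.2, if_pos hlt]
  · have hpt : EqOn (fun s => (s - t) ^ (1/2 - β - 1) * liouvKer (β - 1/2) b s)
        (fun _ => (0:ℝ)) (Ioo t T) := by
      intro s hs
      simp only [mem_Ioo] at hs
      unfold liouvKer
      simp [indicator_apply, mem_Ioo, show ¬ s < b from by linarith [hs.1]]
    refine ⟨(integrableOn_congr_fun hpt measurableSet_Ioo).2 (integrableOn_zero), ?_⟩
    rw [setIntegral_congr_fun measurableSet_Ioo hpt, integral_zero, if_neg (not_lt.2 hgt.le)]

end beta

theorem ito_isometry_liouville_fbm_small_hurst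
    {Ω : Type*} [MeasurableSpace Ω] (P : Measure Ω) [IsProbabilityMeasure P]
    (T β : ℝ) (hT : 0 < T) (hβ : 0 < β) (hβ' : β < 1/2)
    (W : ℝ → Ω → ℝ)
    (hW2 : ∀ t ∈ Icc (0 : ℝ) T, MemLp (W t) 2 P)
    (hWmean : ∀ t ∈ Icc (0 : ℝ) T, ∫ ω, W t ω ∂P = 0)
    (hWcov : ∀ s ∈ Icc (0 : ℝ) T, ∀ t ∈ Icc (0 : ℝ) T,
      ∫ ω, W s ω * W t ω ∂P = fbmCov β s t)
    (N : ℕ) (A B c : Fin N → ℝ)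
    (hAB : ∀ j, 0 ≤ A j ∧ A j < B j ∧ B j ≤ T)
    (hdisj : Pairwise fun i j => Disjoint (Ioc (A i) (B i)) (Ioc (A j) (B j))) :
    let g : ℝ → ℝ := fun s => (Real.Gamma (β + 1/2))⁻¹ * ∑ j, c j *
      ((Ioo 0 (B j)).indicator (fun s => (B j - s) ^ (β - 1/2)) s -
       (Ioo 0 (A j)).indicator (fun s => (A j - s) ^ (β - 1/2)) s)
    MemLp g 2 (msr 0 T) ∧
    (fun s => ∑ j, c j * (Ioc (A j) (B j)).indicator (fun _ => (1 : ℝ)) s)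
      =ᵐ[msr 0 T] rightFrac T (1/2 - β) g ∧
    ∫ ω, (∑ j, c j * (W (B j) ω - W (A j) ω)) ^ 2 ∂P = ∫ s in Ioo 0 T, (g s) ^ 2 := by
  intro g
  have hg : g = fun s => (Real.Gamma (β + 1/2))⁻¹ *
      ∑ j, c j * (liouvKer (β - 1/2) (B j) s - liouvKer (β - 1/2) (A j) s) := rfl
  have hΓq : 0 < Real.Gamma (β + 1/2) := Real.Gamma_pos_of_pos (by linarith)
  have hΓp : 0 < Real.Gamma (1/2 - β) := Real.Gamma_pos_of_pos (by linarith)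
  have hBT : ∀ j, B j ≤ T := fun j => (hAB j).2.2
  have hAT : ∀ j, A j ≤ T := fun j => le_trans (hAB j).2.1.le (hAB j).2.2
  have hA0 : ∀ j, 0 ≤ A j := fun j => (hAB j).1
  have hB0 : ∀ j, 0 ≤ B j := fun j => le_trans (hA0 j) (hAB j).2.1.le
  have hKB : ∀ j, MemLp (liouvKer (β - 1/2) (B j)) 2 (msr 0 T) :=
    fun j => ker_memL2 hβ (hBT j)
  have hKA : ∀ j, MemLp (liouvKer (β - 1/2) (A j)) 2 (msr 0 T) :=
    fun j => ker_memL2 hβ (hAT j)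
  -- Part 1
  have part1 : MemLp g 2 (msr 0 T) := by
    rw [hg]
    apply MemLp.const_mul
    exact memLp_finset_sum Finset.univ
      (fun j _ => (((hKB j).sub (hKA j)).const_mul (c j)))
  -- Part 2
  have part2 : (fun s => ∑ j, c j * (Ioc (A j) (B j)).indicator (fun _ => (1 : ℝ)) s)
      =ᵐ[msr 0 T] rightFrac T (1/2 - β) g := by
    have hne : ∀ x : ℝ, ∀ᵐ t ∂(msr 0 T), t ≠ x := by
      intro x
      rw [ae_iff]
      have hset : {a : ℝ | ¬ a ≠ x} = {x} := by ext a; simp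
      rw [hset]
      unfold msr
      rw [Measure.restrict_apply (measurableSet_singleton x)]
      exact measure_mono_null inter_subset_left (measure_singleton x)
    have hae2 : ∀ᵐ t ∂(msr 0 T), ∀ j, t ≠ A j ∧ t ≠ B j :=
      ae_all_iff.2 fun j => ((hne (A j)).and (hne (B j)))
    have hae1 : ∀ᵐ t ∂(msr 0 T), t ∈ Ioo 0 T := ae_restrict_mem measurableSet_Ioo
    filter_upwards [hae1, hae2] with t htT hABne
    simp only [mem_Ioo] at htT
    have hJB := fun j => Jlemma (T := T) hβ hβ' htT.1 (hBT j) (hABne j).2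
    have hJA := fun j => Jlemma (T := T) hβ hβ' htT.1 (hAT j) (hABne j).1
    unfold rightFrac
    simp only [hg]
    have hptg : (fun s => (s - t) ^ (1/2 - β - 1) *
        ((Real.Gamma (β + 1/2))⁻¹ *
          ∑ j, c j * (liouvKer (β - 1/2) (B j) s - liouvKer (β - 1/2) (A j) s)))
        = fun s => (Real.Gamma (β + 1/2))⁻¹ *
            ∑ j, (c j * ((s - t) ^ (1/2 - β - 1) * liouvKer (β - 1/2) (B j) s)
              - c j * ((s - t) ^ (1/2 - β - 1) * liouvKer (β - 1/2) (A j) s)) := by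
      funext s
      rw [← mul_assoc, mul_comm ((s - t) ^ (1/2 - β - 1)) (Real.Gamma (β + 1/2))⁻¹,
        mul_assoc, Finset.mul_sum]
      congr 1
      exact Finset.sum_congr rfl fun j _ => by ring
    have hint : ∀ j : Fin N, Integrable
        (fun s => c j * ((s - t) ^ (1/2 - β - 1) * liouvKer (β - 1/2) (B j) s)
          - c j * ((s - t) ^ (1/2 - β - 1) * liouvKer (β - 1/2) (A j) s))
        (volume.restrict (Ioo t T)) :=
      fun j => ((hJB j).1.const_mul (c j)).sub ((hJA j).1.const_mul (c j))
    rw [hptg, integral_const_mul, integral_finset_sum _ (fun j _ => hint j)]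
    have hterm : ∀ j : Fin N,
        (∫ s in Ioo t T, (c j * ((s - t) ^ (1/2 - β - 1) * liouvKer (β - 1/2) (B j) s)
            - c j * ((s - t) ^ (1/2 - β - 1) * liouvKer (β - 1/2) (A j) s)))
        = c j * ((if t < B j then Real.Gamma (1/2 - β) * Real.Gamma (β + 1/2) else 0)
            - (if t < A j then Real.Gamma (1/2 - β) * Real.Gamma (β + 1/2) else 0)) := by
      intro j
      have i1 : Integrable (fun s => c j * ((s - t) ^ (1/2 - β - 1) * liouvKer (β - 1/2) (B j) s))
          (volume.restrict (Ioo t T)) := (hJB j).1.const_mul (c j)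
      have i2 : Integrable (fun s => c j * ((s - t) ^ (1/2 - β - 1) * liouvKer (β - 1/2) (A j) s))
          (volume.restrict (Ioo t T)) := (hJA j).1.const_mul (c j)
      rw [integral_sub i1 i2, integral_const_mul, integral_const_mul, (hJB j).2, (hJA j).2]
      ring
    simp only [hterm]
    rw [Finset.mul_sum, Finset.mul_sum]
    refine Finset.sum_congr rfl fun j _ => ?_
    rcases lt_trichotomy t (A j) with h1 | h1 | h1
    · have h2 : t < B j := lt_trans h1 (hAB j).2.1
      rw [if_pos h2, if_pos h1,
        indicator_of_notMem (fun hm => absurd (mem_Ioc.1 hm).1 (not_lt.2 h1.le))]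
      simp
    · exact absurd h1 (hABne j).1
    · rw [if_neg (not_lt.2 h1.le)]
      rcases lt_or_gt_of_ne (hABne j).2 with h2 | h2
      · rw [if_pos h2, indicator_of_mem (mem_Ioc.2 ⟨h1, h2.le⟩), sub_zero, mul_one,
          show (Real.Gamma (1/2 - β))⁻¹ * ((Real.Gamma (β + 1/2))⁻¹
              * (c j * (Real.Gamma (1/2 - β) * Real.Gamma (β + 1/2))))
            = c j * (Real.Gamma (1/2 - β) * (Real.Gamma (1/2 - β))⁻¹)
              * (Real.Gamma (β + 1/2) * (Real.Gamma (β + 1/2))⁻¹) from by ring,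
          mul_inv_cancel₀ hΓp.ne', mul_inv_cancel₀ hΓq.ne', mul_one, mul_one]
      · rw [if_neg (not_lt.2 h2.le),
          indicator_of_notMem (fun hm => absurd (mem_Ioc.1 hm).2 (not_le.2 h2))]
        simp
  -- Part 3
  have hWB : ∀ j, MemLp (W (B j)) 2 P := fun j => hW2 _ ⟨hB0 j, hBT j⟩
  have hWA : ∀ j, MemLp (W (A j)) 2 P := fun j => hW2 _ ⟨hA0 j, hAT j⟩
  have hX : ∀ j, MemLp (fun ω => c j * (W (B j) ω - W (A j) ω)) 2 P :=
    fun j => ((hWB j).sub (hWA j)).const_mul (c j)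
  have hmemB : ∀ j, B j ∈ Icc (0:ℝ) T := fun j => ⟨hB0 j, hBT j⟩
  have hmemA : ∀ j, A j ∈ Icc (0:ℝ) T := fun j => ⟨hA0 j, hAT j⟩
  set D : Fin N → Fin N → ℝ := fun i j =>
    (fbmCov β (B i) (B j) - fbmCov β (B i) (A j))
      - (fbmCov β (A i) (B j) - fbmCov β (A i) (A j)) with hD
  have hL : ∫ ω, (∑ j, c j * (W (B j) ω - W (A j) ω)) ^ 2 ∂P
      = ∑ i, ∑ j, c i * c j * D i j := by
    have hsq : ∀ ω : Ω, (∑ j, c j * (W (B j) ω - W (A j) ω)) ^ 2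
        = ∑ i, ∑ j, (c i * (W (B i) ω - W (A i) ω)) * (c j * (W (B j) ω - W (A j) ω)) := by
      intro ω; rw [pow_two, Finset.sum_mul_sum]
    simp only [hsq]
    rw [integral_finset_sum _
      (fun i _ => integrable_finset_sum _ (fun j _ => myint_mul (hX i) (hX j)))]
    refine Finset.sum_congr rfl fun i _ => ?_
    rw [integral_finset_sum _ (fun j _ => myint_mul (hX i) (hX j))]
    refine Finset.sum_congr rfl fun j _ => ?_
    have e : ∀ ω : Ω, (c i * (W (B i) ω - W (A i) ω)) * (c j * (W (B j) ω - W (A j) ω))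
        = (c i * c j) * ((W (B i) ω * W (B j) ω - W (B i) ω * W (A j) ω)
            - (W (A i) ω * W (B j) ω - W (A i) ω * W (A j) ω)) := by
      intro ω; ring
    simp only [e]
    have i1 : Integrable (fun ω => W (B i) ω * W (B j) ω) P := myint_mul (hWB i) (hWB j)
    have i2 : Integrable (fun ω => W (B i) ω * W (A j) ω) P := myint_mul (hWB i) (hWA j)
    have i3 : Integrable (fun ω => W (A i) ω * W (B j) ω) P := myint_mul (hWA i) (hWB j)
    have i4 : Integrable (fun ω => W (A i) ω * W (A j) ω) P := myint_mul (hWA i) (hWA j)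
    have i12 : Integrable (fun ω => W (B i) ω * W (B j) ω - W (B i) ω * W (A j) ω) P := i1.sub i2
    have i34 : Integrable (fun ω => W (A i) ω * W (B j) ω - W (A i) ω * W (A j) ω) P := i3.sub i4
    rw [integral_const_mul, integral_sub i12 i34, integral_sub i1 i2, integral_sub i3 i4,
      hWcov _ (hmemB i) _ (hmemB j), hWcov _ (hmemB i) _ (hmemA j),
      hWcov _ (hmemA i) _ (hmemB j), hWcov _ (hmemA i) _ (hmemA j)]
  have hcov2 : ∀ b1 b2 : ℝ, b1 ≤ T → b2 ≤ T →
      ∫ s in Ioo 0 T, liouvKer (β - 1/2) b1 s * liouvKer (β - 1/2) b2 s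
        = Real.Gamma (β + 1/2) ^ 2 * fbmCov β b1 b2 := by
    intro b1 b2 h1 h2
    rw [ker_cov h1 h2]
    unfold fbmCov
    rw [← mul_assoc, mul_inv_cancel₀ (by positivity), one_mul]
  have hR : ∫ s in Ioo 0 T, (g s) ^ 2 = ∑ i, ∑ j, c i * c j * D i j := by
    have hsq : ∀ s : ℝ, (g s) ^ 2 = ((Real.Gamma (β + 1/2))⁻¹) ^ 2 *
        ∑ i, ∑ j, (c i * (liouvKer (β - 1/2) (B i) s - liouvKer (β - 1/2) (A i) s))
          * (c j * (liouvKer (β - 1/2) (B j) s - liouvKer (β - 1/2) (A j) s)) := by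
      intro s
      simp only [hg]
      rw [mul_pow, pow_two (∑ j, c j * (liouvKer (β - 1/2) (B j) s - liouvKer (β - 1/2) (A j) s)),
        Finset.sum_mul_sum]
    have hψ : ∀ j, MemLp (fun s => c j * (liouvKer (β - 1/2) (B j) s - liouvKer (β - 1/2) (A j) s))
        2 (msr 0 T) := fun j => ((hKB j).sub (hKA j)).const_mul (c j)
    have hterm : ∀ i j : Fin N,
        (∫ s in Ioo 0 T, (c i * (liouvKer (β - 1/2) (B i) s - liouvKer (β - 1/2) (A i) s))
          * (c j * (liouvKer (β - 1/2) (B j) s - liouvKer (β - 1/2) (A j) s)))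
        = Real.Gamma (β + 1/2) ^ 2 * (c i * c j * D i j) := by
      intro i j
      have e : ∀ s : ℝ, (c i * (liouvKer (β - 1/2) (B i) s - liouvKer (β - 1/2) (A i) s))
          * (c j * (liouvKer (β - 1/2) (B j) s - liouvKer (β - 1/2) (A j) s))
          = (c i * c j) * ((liouvKer (β - 1/2) (B i) s * liouvKer (β - 1/2) (B j) s
              - liouvKer (β - 1/2) (B i) s * liouvKer (β - 1/2) (A j) s)
            - (liouvKer (β - 1/2) (A i) s * liouvKer (β - 1/2) (B j) s
              - liouvKer (β - 1/2) (A i) s * liouvKer (β - 1/2) (A j) s)) := by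
        intro s; ring
      simp only [e]
      have i1 : Integrable (fun s => liouvKer (β - 1/2) (B i) s * liouvKer (β - 1/2) (B j) s)
          (volume.restrict (Ioo 0 T)) := myint_mul (hKB i) (hKB j)
      have i2 : Integrable (fun s => liouvKer (β - 1/2) (B i) s * liouvKer (β - 1/2) (A j) s)
          (volume.restrict (Ioo 0 T)) := myint_mul (hKB i) (hKA j)
      have i3 : Integrable (fun s => liouvKer (β - 1/2) (A i) s * liouvKer (β - 1/2) (B j) s)
          (volume.restrict (Ioo 0 T)) := myint_mul (hKA i) (hKB j)
      have i4 : Integrable (fun s => liouvKer (β - 1/2) (A i) s * liouvKer (β - 1/2) (A j) s)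
          (volume.restrict (Ioo 0 T)) := myint_mul (hKA i) (hKA j)
      have i12 : Integrable (fun s => liouvKer (β - 1/2) (B i) s * liouvKer (β - 1/2) (B j) s
          - liouvKer (β - 1/2) (B i) s * liouvKer (β - 1/2) (A j) s)
          (volume.restrict (Ioo 0 T)) := i1.sub i2
      have i34 : Integrable (fun s => liouvKer (β - 1/2) (A i) s * liouvKer (β - 1/2) (B j) s
          - liouvKer (β - 1/2) (A i) s * liouvKer (β - 1/2) (A j) s)
          (volume.restrict (Ioo 0 T)) := i3.sub i4
      rw [integral_const_mul, integral_sub i12 i34, integral_sub i1 i2, integral_sub i3 i4,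
        hcov2 _ _ (hBT i) (hBT j), hcov2 _ _ (hBT i) (hAT j),
        hcov2 _ _ (hAT i) (hBT j), hcov2 _ _ (hAT i) (hAT j), hD]
      ring
    have hψprod : ∀ i j : Fin N, Integrable
        (fun s => (c i * (liouvKer (β - 1/2) (B i) s - liouvKer (β - 1/2) (A i) s))
          * (c j * (liouvKer (β - 1/2) (B j) s - liouvKer (β - 1/2) (A j) s)))
        (volume.restrict (Ioo 0 T)) := fun i j => myint_mul (hψ i) (hψ j)
    simp only [hsq]
    rw [integral_const_mul,
      integral_finset_sum _
        (fun i _ => integrable_finset_sum _ (fun j _ => hψprod i j))]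
    have h2 : (∑ i, ∫ s in Ioo 0 T,
        ∑ j, (c i * (liouvKer (β - 1/2) (B i) s - liouvKer (β - 1/2) (A i) s))
          * (c j * (liouvKer (β - 1/2) (B j) s - liouvKer (β - 1/2) (A j) s)))
        = ∑ i, ∑ j, Real.Gamma (β + 1/2) ^ 2 * (c i * c j * D i j) :=
      Finset.sum_congr rfl fun i _ => by
        rw [integral_finset_sum _ (fun j _ => hψprod i j)]
        exact Finset.sum_congr rfl fun j _ => hterm i j
    rw [h2]
    simp only [← Finset.mul_sum]
    rw [← mul_assoc, inv_pow, inv_mul_cancel₀ (by positivity), one_mul]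
  exact ⟨part1, part2, by rw [hL, hR]⟩
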